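/- Bazin-type form of the Desnanot–Jacobi identity: for any (n+2)×n matrix N with entries in a commutative ring and any row indices 1 ≤ k₁ < k₂ < k₃ < k₄ ≤ n+2, one has det(N^{k₁,k₂}) · det(N^{k₃,k₄}) − det(N^{k₁,k₃}) · det(N^{k₂,k₄}) + det(N^{k₁,k₄}) · det(N^{k₂,k₃}) = 0, where N^{i,j} denotes the n×n matrix obtained from N by deleting rows i and j. -/

import Mathlib

namespace ASMDPP

/-- The determinant of the square submatrix of `M` whose rows and columns are those
listed (in order) in `rows` and `cols` (always lists of the same length here). -/
def detOn {R : Type*} [CommRing R] (M : ℕ → ℕ → R) (rows cols : List ℕ) : R :=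
  Matrix.det (Matrix.of fun i j : Fin rows.length => M (rows.getD i 0) (cols.getD j 0))

open Matrix

private lemma lemA {R : Type*} [CommRing R] {m : ℕ} (u : Fin (m+2) → Fin (m+1) → R) (k : Fin (m+1)) :
    ∑ j : Fin (m+2), (-1:R)^(j:ℕ) * u j k * (Matrix.of fun a b => u (j.succAbove a) b).det = 0 := by
  set M : Matrix (Fin (m+2)) (Fin (m+2)) R :=
    Matrix.of fun i j => Fin.cases (u j k) (fun i' => u j i') i with hM
  have h0 : M.det = 0 := by
    apply det_zero_of_row_eq (i := 0) (j := k.succ) (Fin.succ_ne_zero k).symm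
    funext j
    simp [hM]
  rw [det_succ_row_zero] at h0
  rw [← h0]
  refine Finset.sum_congr rfl fun j _ => ?_
  have h1 : M 0 j = u j k := by simp [hM]
  have h2 : M.submatrix Fin.succ j.succAbove = (Matrix.of fun a b => u (j.succAbove a) b)ᵀ := by
    ext a b
    simp [hM]
  rw [h1, h2, Matrix.det_transpose]

private lemma key {R : Type*} [CommRing R] {m : ℕ} (u : Fin (m+2) → Fin (m+1) → R)
    (s : Fin m → Fin (m+1) → R) :
    ∑ j : Fin (m+2), (-1:R)^(j:ℕ) * (Matrix.of fun a b => u (j.succAbove a) b).det *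
      (Matrix.of (Fin.cases (u j) s : Fin (m+1) → Fin (m+1) → R)).det = 0 := by
  have expand : ∀ j : Fin (m+2),
      (Matrix.of (Fin.cases (u j) s : Fin (m+1) → Fin (m+1) → R)).det =
      ∑ k : Fin (m+1), (-1:R)^(k:ℕ) * u j k *
        ((Matrix.of (Fin.cases (u j) s : Fin (m+1) → Fin (m+1) → R)).submatrix Fin.succ k.succAbove).det := by
    intro j
    exact det_succ_row_zero _
  have sub_eq : ∀ (j : Fin (m+2)) (k : Fin (m+1)),
      ((Matrix.of (Fin.cases (u j) s : Fin (m+1) → Fin (m+1) → R)).submatrix Fin.succ k.succAbove) =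
      Matrix.of (fun a b => s a (k.succAbove b)) := by
    intro j k; ext a b; simp
  calc ∑ j : Fin (m+2), (-1:R)^(j:ℕ) * (Matrix.of fun a b => u (j.succAbove a) b).det *
      (Matrix.of (Fin.cases (u j) s : Fin (m+1) → Fin (m+1) → R)).det
      = ∑ j : Fin (m+2), ∑ k : Fin (m+1),
        ((-1:R)^(k:ℕ) * (Matrix.of (fun a b => s a (k.succAbove b))).det) *
        ((-1:R)^(j:ℕ) * u j k * (Matrix.of fun a b => u (j.succAbove a) b).det) := by
        refine Finset.sum_congr rfl fun j _ => ?_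
        rw [expand j, Finset.mul_sum]
        refine Finset.sum_congr rfl fun k _ => ?_
        rw [sub_eq j k]; ring
    _ = ∑ k : Fin (m+1), ((-1:R)^(k:ℕ) * (Matrix.of (fun a b => s a (k.succAbove b))).det) *
        ∑ j : Fin (m+2), (-1:R)^(j:ℕ) * u j k * (Matrix.of fun a b => u (j.succAbove a) b).det := by
        rw [Finset.sum_comm]
        refine Finset.sum_congr rfl fun k _ => ?_
        rw [Finset.mul_sum]
    _ = 0 := by
        refine Finset.sum_eq_zero fun k _ => ?_
        rw [lemA u k, mul_zero]

private lemma coe_succAbove {d : ℕ} (p : Fin (d+1)) (i : Fin d) :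
    ((p.succAbove i) : ℕ) = if (i:ℕ) < (p:ℕ) then (i:ℕ) else (i:ℕ)+1 := by
  simp only [Fin.succAbove, Fin.lt_def, Fin.coe_castSucc]
  split_ifs <;> simp

private lemma cases_eval {d : ℕ} {C : Sort*} (v : C) (w : Fin d → C) (x : Fin (d+1))
    (h : 0 < (x:ℕ)) : (Fin.cases v w x : C) = w ⟨(x:ℕ)-1, by omega⟩ := by
  rcases x with ⟨x, hx⟩
  cases x with
  | zero => simp at h
  | succ x =>
    rw [Fin.cases_succ']
    congr 1

private lemma det_cons_repeat {R : Type*} [CommRing R] {d : ℕ} (v : Fin (d+1) → R)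
    (w : Fin d → Fin (d+1) → R) (q : Fin d) (h : w q = v) :
    (Matrix.of (Fin.cases v w : Fin (d+1) → Fin (d+1) → R)).det = 0 := by
  apply det_zero_of_row_eq (i := 0) (j := q.succ) (Fin.succ_ne_zero q).symm
  show (Fin.cases v w : Fin (d+1) → Fin (d+1) → R) 0 = (Fin.cases v w : Fin (d+1) → Fin (d+1) → R) q.succ
  simp [h]

private lemma det_rotate {R : Type*} [CommRing R] {d : ℕ} (v : Fin (d+1) → R)
    (w : Fin d → Fin (d+1) → R) (p : Fin (d+1)) (T : Fin (d+1) → Fin (d+1) → R)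
    (hlt : ∀ a : Fin (d+1), (h : (a:ℕ) < (p:ℕ)) → T a = w ⟨(a:ℕ), by omega⟩)
    (heq : T p = v)
    (hgt : ∀ a : Fin (d+1), (h : (p:ℕ) < (a:ℕ)) → T a = w ⟨(a:ℕ)-1, by omega⟩) :
    (Matrix.of T).det = (-1:R)^(p:ℕ) * (Matrix.of (Fin.cases v w : Fin (d+1) → Fin (d+1) → R)).det := by
  have hmat : Matrix.of T =
      (Matrix.of (Fin.cases v w : Fin (d+1) → Fin (d+1) → R)).submatrix (Fin.cycleRange p) id := by
    ext a b
    simp only [Matrix.submatrix_apply, Matrix.of_apply, id]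
    rcases lt_trichotomy ((a:ℕ)) ((p:ℕ)) with h | h | h
    · rw [Fin.cycleRange_of_lt (Fin.lt_def.mpr h)]
      have hv : ((a + 1 : Fin (d+1)) : ℕ) = (a:ℕ) + 1 := by
        rw [Fin.val_add_one_of_lt (by rw [Fin.lt_iff_val_lt_val, Fin.val_last]; omega)]
      rw [cases_eval _ _ _ (by omega)]
      rw [hlt a h]
      congr 1
      ext
      simp [hv]
    · have : a = p := Fin.ext h
      subst this
      rw [Fin.cycleRange_self, Fin.cases_zero, heq]
    · rw [Fin.cycleRange_of_gt (Fin.lt_def.mpr h)]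
      rw [cases_eval _ _ _ (by omega)]
      rw [hgt a h]
  rw [hmat, Matrix.det_permute, Fin.sign_cycleRange]
  norm_num


private lemma range'_split (s m k : ℕ) (h : k ≤ m) :
    List.range' s m = List.range' s k ++ List.range' (s+k) (m-k) := by
  conv_lhs => rw [show m = (m-k)+k by omega]
  rw [show m - k + k = k + (m - k) by omega]
  exact (List.range'_append_1 (s := s) (m := k) (n := m-k)).symm

private lemma filter_chunk (s len a b : ℕ) (h : ∀ x, s ≤ x → x < s + len → x ≠ a ∧ x ≠ b) :
    (List.range' s len).filter (fun r => r ≠ a ∧ r ≠ b) = List.range' s len := by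
  apply List.filter_eq_self.mpr
  intro x hx
  obtain ⟨i, hi, rfl⟩ := List.mem_range'.1 hx
  simpa using h (s + 1*i) (by omega) (by omega)

private lemma filter_two (n a b : ℕ) (h1 : 1 ≤ a) (hab : a < b) (hb : b ≤ n+2) :
    (List.range' 1 (n+2)).filter (fun r => r ≠ a ∧ r ≠ b) =
      List.range' 1 (a-1) ++ List.range' (a+1) (b-a-1) ++ List.range' (b+1) (n+2-b) := by
  have e1 : List.range' 1 (n+2) = List.range' 1 (a-1) ++ List.range' a (n+3-a) := by
    rw [range'_split 1 (n+2) (a-1) (by omega), show 1+(a-1) = a by omega,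
      show n+2-(a-1) = n+3-a by omega]
  have e2 : List.range' a (n+3-a) = List.range' a 1 ++ List.range' (a+1) (n+2-a) := by
    rw [range'_split a (n+3-a) 1 (by omega), show n+3-a-1 = n+2-a by omega]
  have e3 : List.range' (a+1) (n+2-a) = List.range' (a+1) (b-a-1) ++ List.range' b (n+3-b) := by
    rw [range'_split (a+1) (n+2-a) (b-a-1) (by omega), show a+1+(b-a-1) = b by omega,
      show n+2-a-(b-a-1) = n+3-b by omega]
  have e4 : List.range' b (n+3-b) = List.range' b 1 ++ List.range' (b+1) (n+2-b) := by
    rw [range'_split b (n+3-b) 1 (by omega), show n+3-b-1 = n+2-b by omega]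
  rw [e1, List.filter_append, e2, List.filter_append, e3, List.filter_append, e4,
    List.filter_append]
  rw [filter_chunk 1 (a-1) a b (by omega), filter_chunk (a+1) (b-a-1) a b (by omega),
    filter_chunk (b+1) (n+2-b) a b (by omega)]
  have ha : (List.range' a 1).filter (fun r => r ≠ a ∧ r ≠ b) = [] := by simp
  have hbb : (List.range' b 1).filter (fun r => r ≠ a ∧ r ≠ b) = [] := by simp
  rw [ha, hbb]
  simp [List.append_assoc]

private lemma length_two (n a b : ℕ) (h1 : 1 ≤ a) (hab : a < b) (hb : b ≤ n+2) :
    ((List.range' 1 (n+2)).filter (fun r => r ≠ a ∧ r ≠ b)).length = n := by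
  rw [filter_two n a b h1 hab hb]
  simp only [List.length_append, List.length_range']
  omega

private lemma getD_two (n a b i : ℕ) (h1 : 1 ≤ a) (hab : a < b) (hb : b ≤ n+2) (hi : i < n) :
    ((List.range' 1 (n+2)).filter (fun r => r ≠ a ∧ r ≠ b)).getD i 0 =
      if i+1 < a then i+1 else if i+2 < b then i+2 else i+3 := by
  rw [filter_two n a b h1 hab hb]
  by_cases hia : i < a-1
  · rw [List.getD_append _ _ _ _ (by simp only [List.length_append, List.length_range']; omega),
      List.getD_append _ _ _ _ (by simp only [List.length_range']; omega),
      List.getD_eq_getElem _ _ (by simp only [List.length_range']; omega)]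
    simp only [List.getElem_range']
    split_ifs <;> omega
  · by_cases hib : i < b-2
    · rw [List.getD_append _ _ _ _ (by simp only [List.length_append, List.length_range']; omega),
        List.getD_append_right _ _ _ _ (by simp only [List.length_range']; omega),
        List.getD_eq_getElem _ _ (by simp only [List.length_range']; omega)]
      simp only [List.getElem_range', List.length_range']
      split_ifs <;> omega
    · rw [List.getD_append_right _ _ _ _
        (by simp only [List.length_append, List.length_range']; omega),
        List.getD_eq_getElem _ _ (by simp only [List.length_range', List.length_append]; omega)]
      simp only [List.getElem_range', List.length_range', List.length_append]
      split_ifs <;> omega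

private lemma detOn_eq {R : Type*} [CommRing R] (N : ℕ → ℕ → R) (rows cols : List ℕ) (m : ℕ)
    (h : rows.length = m) (f g : ℕ → ℕ)
    (hf : ∀ i, i < m → rows.getD i 0 = f i) (hg : ∀ i, i < m → cols.getD i 0 = g i) :
    detOn N rows cols = (Matrix.of fun i j : Fin m => N (f i) (g j)).det := by
  subst h
  unfold detOn
  congr 1
  ext i j
  simp only [Matrix.of_apply]
  rw [hf _ i.isLt, hg _ j.isLt]


private def fT (a b i : ℕ) : ℕ := if i+1 < a then i+1 else if i+2 < b then i+2 else i+3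
private def fl (c i : ℕ) : ℕ := if i+1 < c then i+1 else i+2
private def fS (b c d i : ℕ) : ℕ :=
  if i+1 < b then i+1 else if i+2 < c then i+2 else if i+3 < d then i+3 else i+4

private lemma val_mk {n a : ℕ} (h : a < n) : ((⟨a, h⟩ : Fin n) : ℕ) = a := rfl

private lemma exists_q (k₁ k₂ k₃ k₄ m jv : ℕ) (h₁ : 1 ≤ k₁) (h₁₂ : k₁ < k₂) (h₂₃ : k₂ < k₃)
    (h₃₄ : k₃ < k₄) (h₄ : k₄ ≤ m+4) (hj : jv < m+3)
    (h2 : jv ≠ k₂-2) (h3 : jv ≠ k₃-2) (h4 : jv ≠ k₄-2) :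
    ∃ q, ∃ hq : q < m+1, fS k₂ k₃ k₄ q = fl k₁ jv := by
  refine ⟨if fl k₁ jv < k₂ then fl k₁ jv - 1 else if fl k₁ jv < k₃ then fl k₁ jv - 2
    else if fl k₁ jv < k₄ then fl k₁ jv - 3 else fl k₁ jv - 4, ?_, ?_⟩ <;>
    simp only [fS, fl] <;> split_ifs <;> omega

/-- The Bazin-type form of the Desnanot–Jacobi identity, for an `(n+2) × n` matrix `N`
with rows indexed by `1, …, n+2` and columns indexed by `1, …, n`: `N^{i,j}` is the
`n × n` matrix obtained by deleting rows `i` and `j`. -/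
theorem desnanot_jacobi_bazin {R : Type*} [CommRing R] (n : ℕ)
    (N : ℕ → ℕ → R) (k₁ k₂ k₃ k₄ : ℕ) (h₁ : 1 ≤ k₁) (h₁₂ : k₁ < k₂) (h₂₃ : k₂ < k₃)
    (h₃₄ : k₃ < k₄) (h₄ : k₄ ≤ n + 2) :
    detOn N ((List.range' 1 (n + 2)).filter (fun r => r ≠ k₁ ∧ r ≠ k₂))
        (List.range' 1 n) *
      detOn N ((List.range' 1 (n + 2)).filter (fun r => r ≠ k₃ ∧ r ≠ k₄))
        (List.range' 1 n) -
    detOn N ((List.range' 1 (n + 2)).filter (fun r => r ≠ k₁ ∧ r ≠ k₃))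
        (List.range' 1 n) *
      detOn N ((List.range' 1 (n + 2)).filter (fun r => r ≠ k₂ ∧ r ≠ k₄))
        (List.range' 1 n) +
    detOn N ((List.range' 1 (n + 2)).filter (fun r => r ≠ k₁ ∧ r ≠ k₄))
        (List.range' 1 n) *
      detOn N ((List.range' 1 (n + 2)).filter (fun r => r ≠ k₂ ∧ r ≠ k₃))
        (List.range' 1 n) = 0 := by
  obtain ⟨m, rfl⟩ : ∃ m, n = m + 2 := ⟨n - 2, by omega⟩
  -- bridge each minor to an explicit `Fin`-indexed determinant
  have hb : ∀ a b : ℕ, 1 ≤ a → a < b → b ≤ m + 4 →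
      detOn N ((List.range' 1 (m + 2 + 2)).filter (fun r => r ≠ a ∧ r ≠ b))
        (List.range' 1 (m + 2))
        = (Matrix.of fun i j : Fin (m + 2) => N (fT a b (i : ℕ)) ((j : ℕ) + 1)).det := by
    intro a b ha hab hbb
    refine detOn_eq N _ _ (m + 2) (length_two (m + 2) a b ha hab (by omega)) (fT a b)
      (fun i => i + 1) (fun i hi => ?_) (fun i hi => ?_)
    · rw [getD_two (m + 2) a b i ha hab (by omega) hi]
      simp only [fT]
    · rw [List.getD_eq_getElem _ _ (by rw [List.length_range']; omega)]
      simp [List.getElem_range']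
      omega
  rw [hb k₁ k₂ (by omega) (by omega) (by omega), hb k₃ k₄ (by omega) (by omega) (by omega),
    hb k₁ k₃ (by omega) (by omega) (by omega), hb k₂ k₄ (by omega) (by omega) (by omega),
    hb k₁ k₄ (by omega) (by omega) (by omega), hb k₂ k₃ (by omega) (by omega) (by omega)]
  have hkey := key (R := R) (m := m + 1) (fun i b => N (fl k₁ (i : ℕ)) ((b : ℕ) + 1))
    (fun a b => N (fS k₂ k₃ k₄ (a : ℕ)) ((b : ℕ) + 1))
  have hj2 : k₂ - 2 < m + 1 + 2 := by omega
  have hj3 : k₃ - 2 < m + 1 + 2 := by omega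
  have hj4 : k₄ - 2 < m + 1 + 2 := by omega
  have hsum : ∀ j : Fin (m + 1 + 2),
      (-1:R)^(j:ℕ) *
        (Matrix.of fun a b : Fin (m + 1 + 1) =>
          N (fl k₁ ((j.succAbove a : Fin (m + 1 + 2)) : ℕ)) ((b : ℕ) + 1)).det *
        (Matrix.of (Fin.cases (fun b : Fin (m + 1 + 1) => N (fl k₁ (j : ℕ)) ((b : ℕ) + 1))
          (fun a b => N (fS k₂ k₃ k₄ (a : ℕ)) ((b : ℕ) + 1)) :
            Fin (m + 1 + 1) → Fin (m + 1 + 1) → R)).det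
      = (if j = ⟨k₂ - 2, hj2⟩ then
            -((Matrix.of fun i j : Fin (m + 2) => N (fT k₁ k₂ (i : ℕ)) ((j : ℕ) + 1)).det *
              (Matrix.of fun i j : Fin (m + 2) => N (fT k₃ k₄ (i : ℕ)) ((j : ℕ) + 1)).det)
          else 0) +
        (if j = ⟨k₃ - 2, hj3⟩ then
            (Matrix.of fun i j : Fin (m + 2) => N (fT k₁ k₃ (i : ℕ)) ((j : ℕ) + 1)).det *
              (Matrix.of fun i j : Fin (m + 2) => N (fT k₂ k₄ (i : ℕ)) ((j : ℕ) + 1)).det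
          else 0) +
        (if j = ⟨k₄ - 2, hj4⟩ then
            -((Matrix.of fun i j : Fin (m + 2) => N (fT k₁ k₄ (i : ℕ)) ((j : ℕ) + 1)).det *
              (Matrix.of fun i j : Fin (m + 2) => N (fT k₂ k₃ (i : ℕ)) ((j : ℕ) + 1)).det)
          else 0) := by
    intro j
    by_cases e2 : j = ⟨k₂ - 2, hj2⟩
    · subst e2
      have hv : ((⟨k₂ - 2, hj2⟩ : Fin (m + 1 + 2)) : ℕ) = k₂ - 2 := rfl
      rw [if_pos rfl, if_neg (Fin.ne_of_val_ne (show (k₂-2 : ℕ) ≠ k₃-2 by omega)),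
        if_neg (Fin.ne_of_val_ne (show (k₂-2 : ℕ) ≠ k₄-2 by omega))]
      have hA : (Matrix.of fun a b : Fin (m + 1 + 1) =>
          N (fl k₁ (((⟨k₂ - 2, hj2⟩ : Fin (m + 1 + 2)).succAbove a : Fin (m + 1 + 2)) : ℕ))
            ((b : ℕ) + 1))
          = (Matrix.of fun i j : Fin (m + 2) => N (fT k₁ k₂ (i : ℕ)) ((j : ℕ) + 1)) := by
        ext a b
        simp only [Matrix.of_apply]
        congr 1
        rw [coe_succAbove]
        simp only [hv, fl, fT]
        split_ifs <;> omega
      have hrot := det_rotate (R := R) (d := m + 1)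
        (fun b : Fin (m + 1 + 1) => N (fl k₁ ((⟨k₂ - 2, hj2⟩ : Fin (m + 1 + 2)) : ℕ)) ((b : ℕ) + 1))
        (fun a b => N (fS k₂ k₃ k₄ (a : ℕ)) ((b : ℕ) + 1))
        ⟨k₂ - 1, by omega⟩
        (fun i j => N (fT k₃ k₄ (i : ℕ)) ((j : ℕ) + 1))
        (fun a ha => by
          funext b
          show N (fT k₃ k₄ (a : ℕ)) ((b : ℕ) + 1) = N (fS k₂ k₃ k₄ (a : ℕ)) ((b : ℕ) + 1)
          have ha' : (a : ℕ) < k₂ - 1 := ha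
          congr 1
          simp only [fT, fS]
          split_ifs <;> omega)
        (by
          funext b
          show N (fT k₃ k₄ (k₂ - 1)) ((b : ℕ) + 1) = N (fl k₁ (k₂ - 2)) ((b : ℕ) + 1)
          congr 1
          simp only [fT, fl]
          split_ifs <;> omega)
        (fun a ha => by
          funext b
          show N (fT k₃ k₄ (a : ℕ)) ((b : ℕ) + 1) = N (fS k₂ k₃ k₄ ((a : ℕ) - 1)) ((b : ℕ) + 1)
          have ha' : k₂ - 1 < (a : ℕ) := ha
          congr 1
          simp only [fT, fS]
          split_ifs <;> omega)
      have hrot' : (Matrix.of (fun i j : Fin (m + 1 + 1) => N (fT k₃ k₄ (i : ℕ)) ((j : ℕ) + 1))).det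
          = (-1:R)^(k₂-1) * (Matrix.of (Fin.cases
            (fun b : Fin (m + 1 + 1) =>
              N (fl k₁ ((⟨k₂ - 2, hj2⟩ : Fin (m + 1 + 2)) : ℕ)) ((b : ℕ) + 1))
            (fun a b => N (fS k₂ k₃ k₄ (a : ℕ)) ((b : ℕ) + 1)) :
              Fin (m + 1 + 1) → Fin (m + 1 + 1) → R)).det := hrot
      have hsq : (-1:R)^(k₂-1) * (-1:R)^(k₂-1) = 1 := by
        rw [← pow_add]; exact Even.neg_one_pow ⟨k₂ - 1, by omega⟩
      have hB : (Matrix.of (Fin.cases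
            (fun b : Fin (m + 1 + 1) =>
              N (fl k₁ ((⟨k₂ - 2, hj2⟩ : Fin (m + 1 + 2)) : ℕ)) ((b : ℕ) + 1))
            (fun a b => N (fS k₂ k₃ k₄ (a : ℕ)) ((b : ℕ) + 1)) :
              Fin (m + 1 + 1) → Fin (m + 1 + 1) → R)).det
          = (-1:R)^(k₂-1) *
            (Matrix.of fun i j : Fin (m + 2) => N (fT k₃ k₄ (i : ℕ)) ((j : ℕ) + 1)).det := by
        rw [hrot', ← mul_assoc, hsq, one_mul]
      rw [hA, hB]
      have hmul : (-1:R)^(k₂-2) * (-1:R)^(k₂-1) = -1 := by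
        rw [← pow_add]; exact Odd.neg_one_pow ⟨k₂ - 2, by omega⟩
      show (-1:R)^(k₂-2) *
            (Matrix.of fun i j : Fin (m + 2) => N (fT k₁ k₂ (i : ℕ)) ((j : ℕ) + 1)).det *
            ((-1:R)^(k₂-1) *
              (Matrix.of fun i j : Fin (m + 2) => N (fT k₃ k₄ (i : ℕ)) ((j : ℕ) + 1)).det) = _
      calc (-1:R)^(k₂-2) *
            (Matrix.of fun i j : Fin (m + 2) => N (fT k₁ k₂ (i : ℕ)) ((j : ℕ) + 1)).det *
            ((-1:R)^(k₂-1) *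
              (Matrix.of fun i j : Fin (m + 2) => N (fT k₃ k₄ (i : ℕ)) ((j : ℕ) + 1)).det)
          = ((-1:R)^(k₂-2) * (-1:R)^(k₂-1)) *
            ((Matrix.of fun i j : Fin (m + 2) => N (fT k₁ k₂ (i : ℕ)) ((j : ℕ) + 1)).det *
              (Matrix.of fun i j : Fin (m + 2) => N (fT k₃ k₄ (i : ℕ)) ((j : ℕ) + 1)).det) := by
            ring
        _ = _ := by rw [hmul]; ring
    · by_cases e3 : j = ⟨k₃ - 2, hj3⟩
      · subst e3
        rw [if_neg (Fin.ne_of_val_ne (show (k₃-2 : ℕ) ≠ k₂-2 by omega)), if_pos rfl, if_neg (Fin.ne_of_val_ne (show (k₃-2 : ℕ) ≠ k₄-2 by omega))]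
        have hA : (Matrix.of fun a b : Fin (m + 1 + 1) =>
            N (fl k₁ (((⟨k₃ - 2, hj3⟩ : Fin (m + 1 + 2)).succAbove a : Fin (m + 1 + 2)) : ℕ))
              ((b : ℕ) + 1))
            = (Matrix.of fun i j : Fin (m + 2) => N (fT k₁ k₃ (i : ℕ)) ((j : ℕ) + 1)) := by
          ext a b
          simp only [Matrix.of_apply]
          congr 1
          rw [coe_succAbove]
          simp only [show ((⟨k₃ - 2, hj3⟩ : Fin (m + 1 + 2)) : ℕ) = k₃ - 2 from rfl, fl, fT]
          split_ifs <;> omega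
        have hrot := det_rotate (R := R) (d := m + 1)
          (fun b : Fin (m + 1 + 1) => N (fl k₁ ((⟨k₃ - 2, hj3⟩ : Fin (m + 1 + 2)) : ℕ)) ((b : ℕ) + 1))
          (fun a b => N (fS k₂ k₃ k₄ (a : ℕ)) ((b : ℕ) + 1))
          ⟨k₃ - 2, by omega⟩
          (fun i j => N (fT k₂ k₄ (i : ℕ)) ((j : ℕ) + 1))
          (fun a ha => by
            funext b
            show N (fT k₂ k₄ (a : ℕ)) ((b : ℕ) + 1) = N (fS k₂ k₃ k₄ (a : ℕ)) ((b : ℕ) + 1)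
            have ha' : (a : ℕ) < k₃ - 2 := ha
            congr 1
            simp only [fT, fS]
            split_ifs <;> omega)
          (by
            funext b
            show N (fT k₂ k₄ (k₃ - 2)) ((b : ℕ) + 1) = N (fl k₁ (k₃ - 2)) ((b : ℕ) + 1)
            congr 1
            simp only [fT, fl]
            split_ifs <;> omega)
          (fun a ha => by
            funext b
            show N (fT k₂ k₄ (a : ℕ)) ((b : ℕ) + 1) = N (fS k₂ k₃ k₄ ((a : ℕ) - 1)) ((b : ℕ) + 1)
            have ha' : k₃ - 2 < (a : ℕ) := ha
            congr 1
            simp only [fT, fS]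
            split_ifs <;> omega)
        have hrot' : (Matrix.of (fun i j : Fin (m + 1 + 1) => N (fT k₂ k₄ (i : ℕ)) ((j : ℕ) + 1))).det
            = (-1:R)^(k₃ - 2) * (Matrix.of (Fin.cases
              (fun b : Fin (m + 1 + 1) =>
                N (fl k₁ ((⟨k₃ - 2, hj3⟩ : Fin (m + 1 + 2)) : ℕ)) ((b : ℕ) + 1))
              (fun a b => N (fS k₂ k₃ k₄ (a : ℕ)) ((b : ℕ) + 1)) :
                Fin (m + 1 + 1) → Fin (m + 1 + 1) → R)).det := hrot
        have hsq : (-1:R)^(k₃ - 2) * (-1:R)^(k₃ - 2) = 1 := by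
          rw [← pow_add]; exact Even.neg_one_pow ⟨k₃ - 2, by omega⟩
        have hB : (Matrix.of (Fin.cases
              (fun b : Fin (m + 1 + 1) =>
                N (fl k₁ ((⟨k₃ - 2, hj3⟩ : Fin (m + 1 + 2)) : ℕ)) ((b : ℕ) + 1))
              (fun a b => N (fS k₂ k₃ k₄ (a : ℕ)) ((b : ℕ) + 1)) :
                Fin (m + 1 + 1) → Fin (m + 1 + 1) → R)).det
            = (-1:R)^(k₃ - 2) *
              (Matrix.of fun i j : Fin (m + 2) => N (fT k₂ k₄ (i : ℕ)) ((j : ℕ) + 1)).det := by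
          rw [hrot', ← mul_assoc, hsq, one_mul]
        rw [hA, hB]
        have hmul : (-1:R)^(k₃-2) * (-1:R)^(k₃ - 2) = 1 := by
          rw [← pow_add]; exact Even.neg_one_pow ⟨k₃-2, by omega⟩
        show (-1:R)^(k₃-2) *
              (Matrix.of fun i j : Fin (m + 2) => N (fT k₁ k₃ (i : ℕ)) ((j : ℕ) + 1)).det *
              ((-1:R)^(k₃ - 2) *
                (Matrix.of fun i j : Fin (m + 2) => N (fT k₂ k₄ (i : ℕ)) ((j : ℕ) + 1)).det) = _
        calc (-1:R)^(k₃-2) *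
              (Matrix.of fun i j : Fin (m + 2) => N (fT k₁ k₃ (i : ℕ)) ((j : ℕ) + 1)).det *
              ((-1:R)^(k₃ - 2) *
                (Matrix.of fun i j : Fin (m + 2) => N (fT k₂ k₄ (i : ℕ)) ((j : ℕ) + 1)).det)
            = ((-1:R)^(k₃-2) * (-1:R)^(k₃ - 2)) *
              ((Matrix.of fun i j : Fin (m + 2) => N (fT k₁ k₃ (i : ℕ)) ((j : ℕ) + 1)).det *
                (Matrix.of fun i j : Fin (m + 2) => N (fT k₂ k₄ (i : ℕ)) ((j : ℕ) + 1)).det) := by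
              ring
          _ = _ := by rw [hmul]; ring
      · by_cases e4 : j = ⟨k₄ - 2, hj4⟩
        · subst e4
          rw [if_neg (Fin.ne_of_val_ne (show (k₄-2 : ℕ) ≠ k₂-2 by omega)), if_neg (Fin.ne_of_val_ne (show (k₄-2 : ℕ) ≠ k₃-2 by omega)), if_pos rfl]
          have hA : (Matrix.of fun a b : Fin (m + 1 + 1) =>
              N (fl k₁ (((⟨k₄ - 2, hj4⟩ : Fin (m + 1 + 2)).succAbove a : Fin (m + 1 + 2)) : ℕ))
                ((b : ℕ) + 1))
              = (Matrix.of fun i j : Fin (m + 2) => N (fT k₁ k₄ (i : ℕ)) ((j : ℕ) + 1)) := by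
            ext a b
            simp only [Matrix.of_apply]
            congr 1
            rw [coe_succAbove]
            simp only [show ((⟨k₄ - 2, hj4⟩ : Fin (m + 1 + 2)) : ℕ) = k₄ - 2 from rfl, fl, fT]
            split_ifs <;> omega
          have hrot := det_rotate (R := R) (d := m + 1)
            (fun b : Fin (m + 1 + 1) => N (fl k₁ ((⟨k₄ - 2, hj4⟩ : Fin (m + 1 + 2)) : ℕ)) ((b : ℕ) + 1))
            (fun a b => N (fS k₂ k₃ k₄ (a : ℕ)) ((b : ℕ) + 1))
            ⟨k₄ - 3, by omega⟩
            (fun i j => N (fT k₂ k₃ (i : ℕ)) ((j : ℕ) + 1))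
            (fun a ha => by
              funext b
              show N (fT k₂ k₃ (a : ℕ)) ((b : ℕ) + 1) = N (fS k₂ k₃ k₄ (a : ℕ)) ((b : ℕ) + 1)
              have ha' : (a : ℕ) < k₄ - 3 := ha
              congr 1
              simp only [fT, fS]
              split_ifs <;> omega)
            (by
              funext b
              show N (fT k₂ k₃ (k₄ - 3)) ((b : ℕ) + 1) = N (fl k₁ (k₄ - 2)) ((b : ℕ) + 1)
              congr 1
              simp only [fT, fl]
              split_ifs <;> omega)
            (fun a ha => by
              funext b
              show N (fT k₂ k₃ (a : ℕ)) ((b : ℕ) + 1) = N (fS k₂ k₃ k₄ ((a : ℕ) - 1)) ((b : ℕ) + 1)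
              have ha' : k₄ - 3 < (a : ℕ) := ha
              congr 1
              simp only [fT, fS]
              split_ifs <;> omega)
          have hrot' : (Matrix.of (fun i j : Fin (m + 1 + 1) => N (fT k₂ k₃ (i : ℕ)) ((j : ℕ) + 1))).det
              = (-1:R)^(k₄ - 3) * (Matrix.of (Fin.cases
                (fun b : Fin (m + 1 + 1) =>
                  N (fl k₁ ((⟨k₄ - 2, hj4⟩ : Fin (m + 1 + 2)) : ℕ)) ((b : ℕ) + 1))
                (fun a b => N (fS k₂ k₃ k₄ (a : ℕ)) ((b : ℕ) + 1)) :
                  Fin (m + 1 + 1) → Fin (m + 1 + 1) → R)).det := hrot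
          have hsq : (-1:R)^(k₄ - 3) * (-1:R)^(k₄ - 3) = 1 := by
            rw [← pow_add]; exact Even.neg_one_pow ⟨k₄ - 3, by omega⟩
          have hB : (Matrix.of (Fin.cases
                (fun b : Fin (m + 1 + 1) =>
                  N (fl k₁ ((⟨k₄ - 2, hj4⟩ : Fin (m + 1 + 2)) : ℕ)) ((b : ℕ) + 1))
                (fun a b => N (fS k₂ k₃ k₄ (a : ℕ)) ((b : ℕ) + 1)) :
                  Fin (m + 1 + 1) → Fin (m + 1 + 1) → R)).det
              = (-1:R)^(k₄ - 3) *
                (Matrix.of fun i j : Fin (m + 2) => N (fT k₂ k₃ (i : ℕ)) ((j : ℕ) + 1)).det := by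
            rw [hrot', ← mul_assoc, hsq, one_mul]
          rw [hA, hB]
          have hmul : (-1:R)^(k₄-2) * (-1:R)^(k₄ - 3) = -1 := by
            rw [← pow_add]; exact Odd.neg_one_pow ⟨k₄ - 3, by omega⟩
          show (-1:R)^(k₄-2) *
                (Matrix.of fun i j : Fin (m + 2) => N (fT k₁ k₄ (i : ℕ)) ((j : ℕ) + 1)).det *
                ((-1:R)^(k₄ - 3) *
                  (Matrix.of fun i j : Fin (m + 2) => N (fT k₂ k₃ (i : ℕ)) ((j : ℕ) + 1)).det) = _
          calc (-1:R)^(k₄-2) *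
                (Matrix.of fun i j : Fin (m + 2) => N (fT k₁ k₄ (i : ℕ)) ((j : ℕ) + 1)).det *
                ((-1:R)^(k₄ - 3) *
                  (Matrix.of fun i j : Fin (m + 2) => N (fT k₂ k₃ (i : ℕ)) ((j : ℕ) + 1)).det)
              = ((-1:R)^(k₄-2) * (-1:R)^(k₄ - 3)) *
                ((Matrix.of fun i j : Fin (m + 2) => N (fT k₁ k₄ (i : ℕ)) ((j : ℕ) + 1)).det *
                  (Matrix.of fun i j : Fin (m + 2) => N (fT k₂ k₃ (i : ℕ)) ((j : ℕ) + 1)).det) := by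
                ring
            _ = _ := by rw [hmul]; ring
        · rw [if_neg e2, if_neg e3, if_neg e4]
          obtain ⟨q, hq, hfsq⟩ := exists_q k₁ k₂ k₃ k₄ m (j : ℕ) h₁ h₁₂ h₂₃ h₃₄ (by omega) j.isLt
            (fun hh => e2 (Fin.ext hh)) (fun hh => e3 (Fin.ext hh)) (fun hh => e4 (Fin.ext hh))
          have hB0 : (Matrix.of (Fin.cases
                (fun b : Fin (m + 1 + 1) => N (fl k₁ (j : ℕ)) ((b : ℕ) + 1))
                (fun a b => N (fS k₂ k₃ k₄ (a : ℕ)) ((b : ℕ) + 1)) :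
                  Fin (m + 1 + 1) → Fin (m + 1 + 1) → R)).det = 0 := by
            refine det_cons_repeat _ _ ⟨q, hq⟩ ?_
            funext b
            show N (fS k₂ k₃ k₄ q) ((b : ℕ) + 1) = N (fl k₁ (j : ℕ)) ((b : ℕ) + 1)
            rw [hfsq]
          rw [hB0]
          ring
  have hkey' : ∑ j : Fin (m + 1 + 2),
      (-1:R)^(j:ℕ) *
        (Matrix.of fun a b : Fin (m + 1 + 1) =>
          N (fl k₁ ((j.succAbove a : Fin (m + 1 + 2)) : ℕ)) ((b : ℕ) + 1)).det *
        (Matrix.of (Fin.cases (fun b : Fin (m + 1 + 1) => N (fl k₁ (j : ℕ)) ((b : ℕ) + 1))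
          (fun a b => N (fS k₂ k₃ k₄ (a : ℕ)) ((b : ℕ) + 1)) :
            Fin (m + 1 + 1) → Fin (m + 1 + 1) → R)).det = 0 := hkey
  rw [Finset.sum_congr rfl (fun j _ => hsum j)] at hkey'
  rw [Finset.sum_add_distrib, Finset.sum_add_distrib] at hkey'
  simp only [Finset.sum_ite_eq', Finset.mem_univ, if_true] at hkey'
  linear_combination -hkey'



end ASMDPP
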